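/- Fix n ≥ 1 and work in ℝⁿ with Lebesgue measure; |x| denotes the Euclidean norm. Let K : ℝⁿ → [0,∞) be a measurable kernel with K(−x) = K(x) for all x ∈ ℝⁿ and ∫_{ℝⁿ} min{1,|x|} K(x) dx < ∞. Let ν ∈ ℝⁿ∖{0}, let H := H_ν be the corresponding halfspace, and let B := B(0,1) be the open unit ball. Then P_K(H;B) < ∞, and P_K(H;B) ≤ J_K(v;B) for every measurable function v : ℝⁿ → [0,1] such that v = χ_H almost everywhere on ℝⁿ∖B. -/

import Mathlib

open MeasureTheory Set Filter Metric
open scoped ENNReal Topology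

/-- The nonlocal energy `J_K(u;Ω)` in `ℝⁿ`. -/
noncomputable def nonlocalJ {n : ℕ} (K : EuclideanSpace ℝ (Fin n) → ℝ)
    (Ω : Set (EuclideanSpace ℝ (Fin n))) (u : EuclideanSpace ℝ (Fin n) → ℝ) : ℝ≥0∞ :=
  (1/2) * (∫⁻ x in Ω, ∫⁻ y in Ω,
      ENNReal.ofReal (K (x - y)) * ENNReal.ofReal |u y - u x|)
    + ∫⁻ x in Ω, ∫⁻ y in Ωᶜ,
        ENNReal.ofReal (K (x - y)) * ENNReal.ofReal |u y - u x|

/-- The halfspace with inner ℝ normal `ν`. -/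
def halfspace {n : ℕ} (ν : EuclideanSpace ℝ (Fin n)) : Set (EuclideanSpace ℝ (Fin n)) :=
  {x | 0 ≤ (inner ℝ x ν : ℝ)}

noncomputable def sgn1 (t : ℝ) : ℝ := if 0 < t then 1 else if t < 0 then -1 else 0

lemma sgn1_neg (t : ℝ) : sgn1 (-t) = - sgn1 t := by
  rcases lt_trichotomy t 0 with h | h | h
  · unfold sgn1
    rw [if_pos (by linarith : (0:ℝ) < -t), if_neg (by linarith : ¬ (0:ℝ) < t), if_pos h]
    ring
  · subst h; simp [sgn1]
  · unfold sgn1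
    rw [if_neg (by linarith : ¬ (0:ℝ) < -t), if_pos (by linarith : -t < (0:ℝ)),
      if_pos h]

lemma abs_sgn1_le (t : ℝ) : |sgn1 t| ≤ 1 := by
  unfold sgn1; split_ifs <;> simp

lemma measurable_sgn1 : Measurable sgn1 := by
  unfold sgn1
  exact Measurable.ite (measurableSet_lt measurable_const measurable_id)
    measurable_const
    (Measurable.ite (measurableSet_lt measurable_id measurable_const)
      measurable_const measurable_const)

section dim
variable {n : ℕ}

lemma measurable_halfspace (ν : EuclideanSpace ℝ (Fin n)) :
    MeasurableSet (halfspace ν) := by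
  have : IsClosed (halfspace ν) :=
    isClosed_le continuous_const ((continuous_id.inner continuous_const))
  exact this.measurableSet

lemma measurable_u (ν : EuclideanSpace ℝ (Fin n)) :
    Measurable ((halfspace ν).indicator (1 : EuclideanSpace ℝ (Fin n) → ℝ)) :=
  measurable_const.indicator (measurable_halfspace ν)

lemma u_apply (ν : EuclideanSpace ℝ (Fin n)) (x : EuclideanSpace ℝ (Fin n)) :
    (halfspace ν).indicator (1 : EuclideanSpace ℝ (Fin n) → ℝ) x
      = if 0 ≤ (inner ℝ x ν : ℝ) then 1 else 0 := by
  simp [Set.indicator_apply, halfspace, Set.mem_setOf_eq]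

lemma u_mem_Icc (ν : EuclideanSpace ℝ (Fin n)) (x : EuclideanSpace ℝ (Fin n)) :
    (halfspace ν).indicator (1 : EuclideanSpace ℝ (Fin n) → ℝ) x ∈ Icc (0:ℝ) 1 := by
  rw [u_apply]; split_ifs <;> norm_num

/-- calibration identity for the halfspace indicator -/
lemma u_calib (ν : EuclideanSpace ℝ (Fin n)) (x y : EuclideanSpace ℝ (Fin n)) :
    |(halfspace ν).indicator (1 : EuclideanSpace ℝ (Fin n) → ℝ) y
      - (halfspace ν).indicator (1 : EuclideanSpace ℝ (Fin n) → ℝ) x|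
    = sgn1 ((inner ℝ (y - x) ν : ℝ)) *
      ((halfspace ν).indicator (1 : EuclideanSpace ℝ (Fin n) → ℝ) y
        - (halfspace ν).indicator (1 : EuclideanSpace ℝ (Fin n) → ℝ) x) := by
  rw [u_apply, u_apply, inner_sub_left]
  unfold sgn1
  by_cases hy : 0 ≤ (inner ℝ y ν : ℝ) <;> by_cases hx : 0 ≤ (inner ℝ x ν : ℝ) <;>
    simp only [if_pos, if_neg, hy, hx, if_true, if_false] <;> split_ifs <;>
    simp_all <;> linarith

/-- if the indicator differs at `x+z` and `x`, then `x` is in a slab of width `‖z‖` -/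
lemma u_diff_slab (ν : EuclideanSpace ℝ (Fin n)) (hν : ν ≠ 0)
    (x z : EuclideanSpace ℝ (Fin n))
    (h : (halfspace ν).indicator (1 : EuclideanSpace ℝ (Fin n) → ℝ) (x + z)
      ≠ (halfspace ν).indicator (1 : EuclideanSpace ℝ (Fin n) → ℝ) x) :
    |(inner ℝ x (‖ν‖⁻¹ • ν) : ℝ)| ≤ ‖z‖ := by
  rw [u_apply, u_apply, inner_add_left] at h
  have hν' : (0:ℝ) < ‖ν‖ := norm_pos_iff.mpr hν
  have key : |(inner ℝ x ν : ℝ)| ≤ |(inner ℝ z ν : ℝ)| := by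
    by_cases hx : 0 ≤ (inner ℝ x ν : ℝ) <;>
      by_cases hxz : 0 ≤ (inner ℝ x ν : ℝ) + (inner ℝ z ν : ℝ) <;>
      simp only [if_pos, if_neg, hx, hxz, if_true, if_false] at h <;>
      first
        | exact absurd rfl h
        | (rw [abs_of_nonneg hx, abs_of_nonpos (by linarith)]; linarith)
        | (rw [abs_of_neg (lt_of_not_ge hx), abs_of_nonneg (by linarith)]; linarith)
  rw [real_inner_smul_right, abs_mul, abs_of_nonneg (by positivity : (0:ℝ) ≤ ‖ν‖⁻¹)]
  calc ‖ν‖⁻¹ * |(inner ℝ x ν : ℝ)| ≤ ‖ν‖⁻¹ * |(inner ℝ z ν : ℝ)| := by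
        apply mul_le_mul_of_nonneg_left key (by positivity)
    _ ≤ ‖ν‖⁻¹ * (‖z‖ * ‖ν‖) := by
        apply mul_le_mul_of_nonneg_left (abs_real_inner_le_norm z ν) (by positivity)
    _ = ‖z‖ := by field_simp

end dim

lemma vol_slab {n : ℕ} (hn : 1 ≤ n) (e : EuclideanSpace ℝ (Fin n)) (he : ‖e‖ = 1)
    (t : ℝ) (ht : 0 ≤ t) :
    volume ({x : EuclideanSpace ℝ (Fin n) | |(inner ℝ x e : ℝ)| ≤ t} ∩ ball 0 1)
      ≤ ENNReal.ofReal (2 ^ n * t) := by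
  set i0 : Fin n := ⟨0, hn⟩
  have hsub : Subsingleton (({i0} : Set (Fin n))) :=
    Set.subsingleton_coe _ |>.mpr Set.subsingleton_singleton
  have horth : Orthonormal ℝ (({i0} : Set (Fin n)).restrict (fun _ => e)) := by
    constructor
    · intro i; exact he
    · intro i j hij; exact absurd (hsub.elim i j) hij
  obtain ⟨b, hb⟩ := horth.exists_orthonormalBasis_extension_of_card_eq
    (by simp)
  have hbi0 : b i0 = e := hb i0 rfl
  set T : Set (Fin n → ℝ) :=
    Set.pi Set.univ (fun i => if i = i0 then Icc (-t) t else Icc (-1 : ℝ) 1) with hT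
  have hTmeas : MeasurableSet T := MeasurableSet.univ_pi (fun i => by
    split <;> exact measurableSet_Icc)
  have hsubset : {x : EuclideanSpace ℝ (Fin n) | |(inner ℝ x e : ℝ)| ≤ t} ∩ ball 0 1
      ⊆ (fun x => (b.repr x : Fin n → ℝ)) ⁻¹' T := by
    rintro x ⟨hx1, hx2⟩
    intro i _
    have hx1' : |(inner ℝ x e : ℝ)| ≤ t := hx1
    have hrepr : b.repr x i = (inner ℝ (b i) x : ℝ) := b.repr_apply_apply x i
    by_cases hi : i = i0
    · simp only [hi, if_pos rfl]
      subst hi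
      rw [hrepr, hbi0, real_inner_comm]
      constructor
      · linarith [abs_le.mp hx1' |>.1]
      · linarith [abs_le.mp hx1' |>.2]
    · simp only [if_neg hi]
      have : |b.repr x i| ≤ 1 := by
        rw [hrepr]
        calc |(inner ℝ (b i) x : ℝ)| ≤ ‖b i‖ * ‖x‖ := abs_real_inner_le_norm _ _
        _ ≤ 1 := by
            rw [b.orthonormal.1 i, one_mul]
            exact le_of_lt (mem_ball_zero_iff.mp hx2)
      constructor
      · linarith [abs_le.mp this |>.1]
      · linarith [abs_le.mp this |>.2]
  have hcomp : (fun x : EuclideanSpace ℝ (Fin n) => (b.repr x : Fin n → ℝ))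
      = (MeasurableEquiv.toLp 2 (Fin n → ℝ)).symm ∘ b.repr := rfl
  have hmp : MeasurePreserving
      (fun x : EuclideanSpace ℝ (Fin n) => (b.repr x : Fin n → ℝ)) volume
      (volume : Measure (Fin n → ℝ)) := by
    rw [hcomp]
    exact (EuclideanSpace.volume_preserving_symm_measurableEquiv_toLp (Fin n)).comp
      b.measurePreserving_repr
  calc volume ({x : EuclideanSpace ℝ (Fin n) | |(inner ℝ x e : ℝ)| ≤ t} ∩ ball 0 1)
      ≤ volume ((fun x : EuclideanSpace ℝ (Fin n) => (b.repr x : Fin n → ℝ)) ⁻¹' T) :=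
        measure_mono hsubset
    _ = (volume : Measure (Fin n → ℝ)) T := hmp.measure_preimage hTmeas.nullMeasurableSet
    _ = ∏ i, volume (if i = i0 then Icc (-t) t else Icc (-1 : ℝ) 1) := volume_pi_pi _
    _ ≤ ENNReal.ofReal (2 ^ n * t) := by
        have : ∀ i : Fin n, volume (if i = i0 then Icc (-t) t else Icc (-1 : ℝ) 1)
            = if i = i0 then ENNReal.ofReal (2 * t) else ENNReal.ofReal 2 := by
          intro i; split <;> simp [Real.volume_Icc] <;> ring_nf <;>
            rw [ENNReal.ofReal_mul ht, ENNReal.ofReal_ofNat]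
        rw [Finset.prod_congr rfl (fun i _ => this i)]
        rw [← Finset.mul_prod_erase Finset.univ _ (Finset.mem_univ i0)]
        rw [if_pos rfl]
        rw [Finset.prod_congr rfl (fun i hi => if_neg (Finset.mem_erase.mp hi).1)]
        rw [Finset.prod_const, Finset.card_erase_of_mem (Finset.mem_univ i0),
          Finset.card_univ, Fintype.card_fin]
        rw [← ENNReal.ofReal_pow (by norm_num : (0:ℝ) ≤ 2),
          ← ENNReal.ofReal_mul (by linarith : (0:ℝ) ≤ 2 * t)]
        apply ENNReal.ofReal_le_ofReal
        have h2 : (2:ℝ) ^ n = 2 * 2 ^ (n - 1) := by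
          rw [← pow_succ']
          congr 1
          omega
        rw [h2]
        ring_nf
        exact le_refl _
lemma J_halfspace_lt_top (hn : 1 ≤ n) (K : EuclideanSpace ℝ (Fin n) → ℝ)
    (hKmeas : Measurable K) (hK0 : ∀ x, 0 ≤ K x) (hKsymm : ∀ x, K (-x) = K x)
    (hKint : ∫⁻ x : EuclideanSpace ℝ (Fin n),
        ENNReal.ofReal (min 1 ‖x‖ * K x) < ⊤)
    (ν : EuclideanSpace ℝ (Fin n)) (hν : ν ≠ 0) :
    nonlocalJ K (ball (0 : EuclideanSpace ℝ (Fin n)) 1)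
        ((halfspace ν).indicator 1) < ⊤ := by
  set u := (halfspace ν).indicator (1 : EuclideanSpace ℝ (Fin n) → ℝ) with hu
  set B := ball (0 : EuclideanSpace ℝ (Fin n)) 1 with hB
  set e := ‖ν‖⁻¹ • ν with he
  have hnorme : ‖e‖ = 1 := norm_smul_inv_norm hν
  set Itot := ∫⁻ x in B, ∫⁻ y, ENNReal.ofReal (K (x - y)) * ENNReal.ofReal |u y - u x|
    with hItot
  -- the total cross-integral bounds both pieces
  have hbound : nonlocalJ K B u ≤ (1/2) * Itot + Itot := by
    unfold nonlocalJ
    gcongr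
    · exact lintegral_mono fun x => setLIntegral_le_lintegral _ _
    · exact lintegral_mono fun x => setLIntegral_le_lintegral _ _
  -- rewrite the inner ℝ integral by translation
  have hstep : Itot = ∫⁻ x in B, ∫⁻ z,
      ENNReal.ofReal (K z) * ENNReal.ofReal |u (x + z) - u x| := by
    rw [hItot]
    apply lintegral_congr fun x => ?_
    rw [← lintegral_add_left_eq_self
      (fun y => ENNReal.ofReal (K (x - y)) * ENNReal.ofReal |u y - u x|) x]
    apply lintegral_congr fun z => ?_
    have h1 : x - (x + z) = -z := by abel
    simp only [h1, hKsymm]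
  -- swap the two integrals
  have hswap : Itot = ∫⁻ z, ∫⁻ x in B,
      ENNReal.ofReal (K z) * ENNReal.ofReal |u (x + z) - u x| := by
    rw [hstep]
    apply lintegral_lintegral_swap
    apply Measurable.aemeasurable
    refine Measurable.mul (f := fun p : EuclideanSpace ℝ (Fin n) × EuclideanSpace ℝ (Fin n) =>
      ENNReal.ofReal (K p.2)) (g := fun p : EuclideanSpace ℝ (Fin n) × EuclideanSpace ℝ (Fin n) =>
      ENNReal.ofReal |u (p.1 + p.2) - u p.1|) ?_ ?_
    · exact (hKmeas.comp measurable_snd).ennreal_ofReal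
    · apply Measurable.ennreal_ofReal
      apply Measurable.abs
      exact ((measurable_u ν).comp (measurable_fst.add measurable_snd)).sub
        ((measurable_u ν).comp measurable_fst)
  -- bound the inner ℝ integral by the slab volume
  have hinner : ∀ z : EuclideanSpace ℝ (Fin n),
      (∫⁻ x in B, ENNReal.ofReal |u (x + z) - u x|)
      ≤ ENNReal.ofReal (2 ^ n * min 1 ‖z‖) := by
    intro z
    set S : Set (EuclideanSpace ℝ (Fin n)) := {x | u (x + z) ≠ u x} with hS
    have hSmeas : MeasurableSet S := by
      have h1 : Measurable fun x : EuclideanSpace ℝ (Fin n) => u (x + z) :=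
        (measurable_u ν).comp (measurable_id.add_const z)
      exact (measurableSet_eq_fun h1 (measurable_u ν)).compl
    have hpt : ∀ x : EuclideanSpace ℝ (Fin n),
        ENNReal.ofReal |u (x + z) - u x| ≤ S.indicator (fun _ => 1) x := by
      intro x
      by_cases hx : u (x + z) = u x
      · simp [hx, Set.indicator_apply]
      · have hxz := u_mem_Icc ν (x + z)
        have hx' := u_mem_Icc ν x
        rw [← hu] at hxz hx'
        have h1 : |u (x + z) - u x| ≤ 1 := by
          rw [abs_le]
          constructor <;> [linarith [hxz.1, hx'.2]; linarith [hxz.2, hx'.1]]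
        rw [Set.indicator_of_mem (by exact hx : x ∈ S)]
        exact ENNReal.ofReal_le_one.mpr h1
    calc (∫⁻ x in B, ENNReal.ofReal |u (x + z) - u x|)
        ≤ ∫⁻ x in B, S.indicator (fun _ => 1) x := lintegral_mono hpt
      _ = volume (S ∩ B) := by
          rw [lintegral_indicator hSmeas]
          simp [Measure.restrict_restrict hSmeas]
      _ ≤ volume ({x : EuclideanSpace ℝ (Fin n) | |(inner ℝ x e : ℝ)| ≤ min 1 ‖z‖} ∩ B) := by
          apply measure_mono
          rintro x ⟨hx1, hx2⟩
          refine ⟨le_min ?_ (u_diff_slab ν hν x z hx1), hx2⟩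
          calc |(inner ℝ x e : ℝ)| ≤ ‖x‖ * ‖e‖ := abs_real_inner_le_norm x e
            _ ≤ 1 := by
                rw [hnorme, mul_one]
                exact le_of_lt (mem_ball_zero_iff.mp hx2)
      _ ≤ ENNReal.ofReal (2 ^ n * min 1 ‖z‖) :=
          vol_slab hn e hnorme _ (le_min (by norm_num) (norm_nonneg z))
  -- assemble
  have hItot_le : Itot ≤ ENNReal.ofReal (2 ^ n) *
      ∫⁻ z : EuclideanSpace ℝ (Fin n), ENNReal.ofReal (min 1 ‖z‖ * K z) := by
    rw [hswap, ← lintegral_const_mul _ (by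
      exact ((measurable_const.min measurable_norm).mul hKmeas).ennreal_ofReal
        : Measurable fun z : EuclideanSpace ℝ (Fin n) => ENNReal.ofReal (min 1 ‖z‖ * K z))]
    apply lintegral_mono fun z => ?_
    rw [lintegral_const_mul _ (by
      apply Measurable.ennreal_ofReal
      exact (((measurable_u ν).comp (measurable_id.add_const z)).sub (measurable_u ν)).abs)]
    calc ENNReal.ofReal (K z) * ∫⁻ x in B, ENNReal.ofReal |u (x + z) - u x|
        ≤ ENNReal.ofReal (K z) * ENNReal.ofReal (2 ^ n * min 1 ‖z‖) := by
          gcongr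
          exact hinner z
      _ = ENNReal.ofReal (2 ^ n) * ENNReal.ofReal (min 1 ‖z‖ * K z) := by
          rw [← ENNReal.ofReal_mul (hK0 z), ← ENNReal.ofReal_mul
            (by positivity : (0:ℝ) ≤ 2 ^ n)]
          congr 1
          ring
  have hfin : Itot < ⊤ := lt_of_le_of_lt hItot_le
    (ENNReal.mul_lt_top ENNReal.ofReal_lt_top hKint)
  calc nonlocalJ K B u ≤ (1/2) * Itot + Itot := hbound
    _ < ⊤ := by
        apply ENNReal.add_lt_top.mpr
        exact ⟨ENNReal.mul_lt_top (by norm_num) hfin, hfin⟩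


lemma J_core (Kb : EuclideanSpace ℝ (Fin n) → ℝ)
    (hKmeas : Measurable Kb) (hK0 : ∀ x, 0 ≤ Kb x) (hKsymm : ∀ x, Kb (-x) = Kb x)
    (hKL1 : (∫⁻ x, ENNReal.ofReal (Kb x)) < ⊤)
    (ν : EuclideanSpace ℝ (Fin n))
    (v : EuclideanSpace ℝ (Fin n) → ℝ) (hvmeas : Measurable v)
    (hv01 : ∀ x, v x ∈ Icc (0:ℝ) 1)
    (hvout : ∀ᵐ x : EuclideanSpace ℝ (Fin n),
      x ∉ ball (0 : EuclideanSpace ℝ (Fin n)) 1 →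
        v x = (halfspace ν).indicator (fun _ => (1:ℝ)) x) :
    nonlocalJ Kb (ball (0 : EuclideanSpace ℝ (Fin n)) 1) ((halfspace ν).indicator 1)
      ≤ nonlocalJ Kb (ball (0 : EuclideanSpace ℝ (Fin n)) 1) v := by
  set B := ball (0 : EuclideanSpace ℝ (Fin n)) 1 with hB
  have hBmeas : MeasurableSet B := measurableSet_ball
  set u := (halfspace ν).indicator (1 : EuclideanSpace ℝ (Fin n) → ℝ) with hu
  have humeas : Measurable u := measurable_u ν
  set μB := volume.restrict B with hμB
  set π1 := μB.prod (volume.restrict B) with hπ1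
  set π2 := μB.prod (volume.restrict Bᶜ) with hπ2
  set πa := μB.prod (volume : Measure (EuclideanSpace ℝ (Fin n))) with hπa
  set σ : EuclideanSpace ℝ (Fin n) × EuclideanSpace ℝ (Fin n) → ℝ :=
    fun p => sgn1 (inner ℝ (p.2 - p.1) ν) with hσ
  set Kd : EuclideanSpace ℝ (Fin n) × EuclideanSpace ℝ (Fin n) → ℝ :=
    fun p => Kb (p.1 - p.2) with hKd
  have hKdmeas : Measurable Kd := hKmeas.comp (measurable_fst.sub measurable_snd)
  have hσmeas : Measurable σ :=
    measurable_sgn1.comp ((continuous_snd.sub continuous_fst).inner continuous_const).measurable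
  -- Kd is integrable w.r.t. the full product measure
  have hKdint_a : Integrable Kd πa := by
    refine ⟨hKdmeas.aestronglyMeasurable, ?_⟩
    rw [hasFiniteIntegral_iff_ofReal (ae_of_all _ fun p => hK0 _)]
    have h1 : ∫⁻ p, ENNReal.ofReal (Kd p) ∂πa
        = ∫⁻ x in B, ∫⁻ y, ENNReal.ofReal (Kb (x - y)) := by
      rw [hπa]
      exact lintegral_prod _ (hKdmeas.ennreal_ofReal).aemeasurable
    rw [h1]
    have h2 : ∀ x : EuclideanSpace ℝ (Fin n),
        (∫⁻ y, ENNReal.ofReal (Kb (x - y))) = ∫⁻ y, ENNReal.ofReal (Kb y) := by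
      intro x
      rw [← lintegral_add_left_eq_self (fun y => ENNReal.ofReal (Kb (x - y))) x]
      apply lintegral_congr fun z => ?_
      have h3 : x - (x + z) = -z := by abel
      rw [h3, hKsymm]
    rw [lintegral_congr h2, setLIntegral_const]
    exact ENNReal.mul_lt_top hKL1 (measure_ball_lt_top)
  have hπ1_eq : π1 = πa.restrict (Set.univ ×ˢ B) := by
    rw [hπa, ← Measure.prod_restrict, Measure.restrict_univ]
  have hπ2_eq : π2 = πa.restrict (Set.univ ×ˢ Bᶜ) := by
    rw [hπa, ← Measure.prod_restrict, Measure.restrict_univ]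
  have hKdint_1 : Integrable Kd π1 := by rw [hπ1_eq]; exact hKdint_a.restrict
  have hKdint_2 : Integrable Kd π2 := by rw [hπ2_eq]; exact hKdint_a.restrict
  -- integrability of Kd times a bounded measurable factor
  have hIπ : ∀ (φ : EuclideanSpace ℝ (Fin n) × EuclideanSpace ℝ (Fin n) → ℝ),
      Measurable φ → (∀ p, |φ p| ≤ 1) →
      ∀ (π : Measure (EuclideanSpace ℝ (Fin n) × EuclideanSpace ℝ (Fin n))),
      Integrable Kd π → Integrable (fun p => Kd p * φ p) π := by
    intro φ hφm hφ1 π hπ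
    apply Integrable.mono hπ (hKdmeas.mul hφm).aestronglyMeasurable
    apply ae_of_all
    intro p
    rw [Real.norm_eq_abs, Real.norm_eq_abs, Pi.mul_apply, abs_mul]
    calc |Kd p| * |φ p| ≤ |Kd p| * 1 :=
          mul_le_mul_of_nonneg_left (hφ1 p) (abs_nonneg _)
      _ = |Kd p| := mul_one _
  -- basic bounds
  have hb_u : ∀ x, u x ∈ Icc (0:ℝ) 1 := fun x => u_mem_Icc ν x
  have habs1 : ∀ a b : ℝ, a ∈ Icc (0:ℝ) 1 → b ∈ Icc (0:ℝ) 1 → |a - b| ≤ 1 := by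
    intro a b ha hb
    rw [abs_le]
    constructor <;> [linarith [ha.1, hb.2]; linarith [ha.2, hb.1]]
  have hσb : ∀ (t : ℝ), |t| ≤ 1 → ∀ p, |σ p * t| ≤ 1 := by
    intro t ht p
    rw [abs_mul]
    exact mul_le_one₀ (abs_sgn1_le _) (abs_nonneg _) ht
  -- measurable difference functions
  have hmdu : Measurable fun p : EuclideanSpace ℝ (Fin n) × EuclideanSpace ℝ (Fin n) =>
      u p.2 - u p.1 := (humeas.comp measurable_snd).sub (humeas.comp measurable_fst)
  have hmdv : Measurable fun p : EuclideanSpace ℝ (Fin n) × EuclideanSpace ℝ (Fin n) =>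
      v p.2 - v p.1 := (hvmeas.comp measurable_snd).sub (hvmeas.comp measurable_fst)
  have hmw1 : Measurable fun p : EuclideanSpace ℝ (Fin n) × EuclideanSpace ℝ (Fin n) =>
      v p.1 - u p.1 := (hvmeas.comp measurable_fst).sub (humeas.comp measurable_fst)
  have hmw2 : Measurable fun p : EuclideanSpace ℝ (Fin n) × EuclideanSpace ℝ (Fin n) =>
      v p.2 - u p.2 := (hvmeas.comp measurable_snd).sub (humeas.comp measurable_snd)
  -- integrability of all products
  have hIau1 : Integrable (fun p => Kd p * |u p.2 - u p.1|) π1 :=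
    hIπ _ hmdu.abs (fun p => by rw [abs_abs]; exact habs1 _ _ (hb_u _) (hb_u _)) π1 hKdint_1
  have hIau2 : Integrable (fun p => Kd p * |u p.2 - u p.1|) π2 :=
    hIπ _ hmdu.abs (fun p => by rw [abs_abs]; exact habs1 _ _ (hb_u _) (hb_u _)) π2 hKdint_2
  have hIav1 : Integrable (fun p => Kd p * |v p.2 - v p.1|) π1 :=
    hIπ _ hmdv.abs (fun p => by rw [abs_abs]; exact habs1 _ _ (hv01 _) (hv01 _)) π1 hKdint_1
  have hIav2 : Integrable (fun p => Kd p * |v p.2 - v p.1|) π2 :=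
    hIπ _ hmdv.abs (fun p => by rw [abs_abs]; exact habs1 _ _ (hv01 _) (hv01 _)) π2 hKdint_2
  have hIσv1 : Integrable (fun p => Kd p * (σ p * (v p.2 - v p.1))) π1 :=
    hIπ _ (hσmeas.mul hmdv) (fun p => hσb _ (habs1 _ _ (hv01 _) (hv01 _)) p) π1 hKdint_1
  have hIσv2 : Integrable (fun p => Kd p * (σ p * (v p.2 - v p.1))) π2 :=
    hIπ _ (hσmeas.mul hmdv) (fun p => hσb _ (habs1 _ _ (hv01 _) (hv01 _)) p) π2 hKdint_2
  have hIσw1_1 : Integrable (fun p => Kd p * (σ p * (v p.1 - u p.1))) π1 :=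
    hIπ _ (hσmeas.mul hmw1) (fun p => hσb _ (habs1 _ _ (hv01 _) (hb_u _)) p) π1 hKdint_1
  have hIσw1_2 : Integrable (fun p => Kd p * (σ p * (v p.1 - u p.1))) π2 :=
    hIπ _ (hσmeas.mul hmw1) (fun p => hσb _ (habs1 _ _ (hv01 _) (hb_u _)) p) π2 hKdint_2
  have hIσw2_1 : Integrable (fun p => Kd p * (σ p * (v p.2 - u p.2))) π1 :=
    hIπ _ (hσmeas.mul hmw2) (fun p => hσb _ (habs1 _ _ (hv01 _) (hb_u _)) p) π1 hKdint_1
  have hIσw2_2 : Integrable (fun p => Kd p * (σ p * (v p.2 - u p.2))) π2 :=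
    hIπ _ (hσmeas.mul hmw2) (fun p => hσb _ (habs1 _ _ (hv01 _) (hb_u _)) p) π2 hKdint_2
  have hIσw1_a : Integrable (fun p => Kd p * (σ p * (v p.1 - u p.1))) πa :=
    hIπ _ (hσmeas.mul hmw1) (fun p => hσb _ (habs1 _ _ (hv01 _) (hb_u _)) p) πa hKdint_a
  -- the kernel times the sign has zero integral
  have hzero : ∀ x : EuclideanSpace ℝ (Fin n),
      (∫ y, Kb (x - y) * sgn1 ((inner ℝ (y - x) ν : ℝ))) = 0 := by
    intro x
    have h1 : (∫ y, Kb (x - y) * sgn1 ((inner ℝ (y - x) ν : ℝ)))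
        = ∫ z, Kb z * sgn1 ((inner ℝ z ν : ℝ)) := by
      rw [← integral_add_left_eq_self
        (fun y => Kb (x - y) * sgn1 ((inner ℝ (y - x) ν : ℝ))) x]
      congr 1
      funext z
      have e1 : x - (x + z) = -z := by abel
      have e2 : x + z - x = z := by abel
      rw [e1, e2, hKsymm]
    have h2 : (∫ z, Kb z * sgn1 ((inner ℝ z ν : ℝ)))
        = - ∫ z, Kb z * sgn1 ((inner ℝ z ν : ℝ)) := by
      conv_lhs => rw [← integral_neg_eq_self
        (fun z => Kb z * sgn1 ((inner ℝ z ν : ℝ))) volume]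
      rw [← integral_neg]
      congr 1
      funext z
      rw [hKsymm, inner_neg_left, sgn1_neg]
      ring
    rw [h1]
    linarith [h2]
  -- hence the full-space linear term vanishes
  have hπa_zero : (∫ p, Kd p * (σ p * (v p.1 - u p.1)) ∂πa) = 0 := by
    rw [hπa, integral_prod _ hIσw1_a]
    have h1 : ∀ x : EuclideanSpace ℝ (Fin n),
        (∫ y, Kb (x - y) * (sgn1 ((inner ℝ (y - x) ν : ℝ)) * (v x - u x))) = 0 := by
      intro x
      have e1 : (fun y => Kb (x - y) * (sgn1 ((inner ℝ (y - x) ν : ℝ)) * (v x - u x)))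
          = fun y => (Kb (x - y) * sgn1 ((inner ℝ (y - x) ν : ℝ))) * (v x - u x) := by
        funext y; ring
      rw [e1, integral_mul_const, hzero x, zero_mul]
    exact (integral_congr_ae (ae_of_all _ fun x => h1 x)).trans (integral_zero _ _)
  -- decomposition of the full product measure
  have hdecomp : πa = π1 + π2 := by
    rw [hπa, hπ1, hπ2, ← Measure.prod_add, Measure.restrict_add_restrict_compl hBmeas]
  have hA2C2 : (∫ p, Kd p * (σ p * (v p.1 - u p.1)) ∂π1)
      + (∫ p, Kd p * (σ p * (v p.1 - u p.1)) ∂π2) = 0 := by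
    rw [hdecomp, integral_add_measure hIσw1_1 hIσw1_2] at hπa_zero
    exact hπa_zero
  -- swap symmetry on π1
  have hswap : (∫ p, Kd p * (σ p * (v p.2 - u p.2)) ∂π1)
      = - ∫ p, Kd p * (σ p * (v p.1 - u p.1)) ∂π1 := by
    have hmp : MeasurePreserving (Prod.swap :
        EuclideanSpace ℝ (Fin n) × EuclideanSpace ℝ (Fin n) → _) π1 π1 :=
      Measure.measurePreserving_swap
    have h2 := hmp.integral_comp
      (MeasurableEquiv.prodComm.measurableEmbedding :
        MeasurableEmbedding (Prod.swap :
          EuclideanSpace ℝ (Fin n) × EuclideanSpace ℝ (Fin n) → _))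
      (fun p => Kd p * (σ p * (v p.1 - u p.1)))
    have hpt : ∀ p : EuclideanSpace ℝ (Fin n) × EuclideanSpace ℝ (Fin n),
        (fun q => Kd q * (σ q * (v q.1 - u q.1))) (Prod.swap p)
        = - (Kd p * (σ p * (v p.2 - u p.2))) := by
      intro p
      have ha : p.2 - p.1 = -(p.1 - p.2) := by abel
      show Kb (p.2 - p.1) * (sgn1 ((inner ℝ (p.1 - p.2) ν : ℝ)) * (v p.2 - u p.2))
        = -(Kb (p.1 - p.2) * (sgn1 ((inner ℝ (p.2 - p.1) ν : ℝ)) * (v p.2 - u p.2)))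
      rw [ha, hKsymm, inner_neg_left, sgn1_neg]
      ring
    simp only [hpt, integral_neg] at h2
    linarith [h2]
  -- the π2 term with second coordinate vanishes a.e.
  have hπ2_zero : (∫ p, Kd p * (σ p * (v p.2 - u p.2)) ∂π2) = 0 := by
    have hvout' : volume {x : EuclideanSpace ℝ (Fin n) |
        ¬ (x ∉ B → v x = (halfspace ν).indicator (fun _ => (1:ℝ)) x)} = 0 := by
      rw [← ae_iff] at *
      exact hvout
    have hM : MeasurableSet {y : EuclideanSpace ℝ (Fin n) | ¬ (v y - u y = 0)} :=
      (measurableSet_eq_fun (hvmeas.sub humeas) measurable_const).compl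
    have hnull : π2 {p : EuclideanSpace ℝ (Fin n) × EuclideanSpace ℝ (Fin n) |
        ¬ (Kd p * (σ p * (v p.2 - u p.2)) = 0)} = 0 := by
      apply measure_mono_null
        (t := (Set.univ : Set (EuclideanSpace ℝ (Fin n))) ×ˢ {y | ¬ (v y - u y = 0)})
      · rintro p hp
        refine ⟨trivial, fun h0 => hp ?_⟩
        show Kd p * (σ p * (v p.2 - u p.2)) = 0
        rw [h0, mul_zero, mul_zero]
      · rw [hπ2, Measure.prod_prod, Measure.restrict_apply hM]
        have hsub2 : {y : EuclideanSpace ℝ (Fin n) | ¬ (v y - u y = 0)} ∩ Bᶜ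
            ⊆ {x : EuclideanSpace ℝ (Fin n) |
              ¬ (x ∉ B → v x = (halfspace ν).indicator (fun _ => (1:ℝ)) x)} := by
          rintro y ⟨hy1, hy2⟩
          intro himp
          apply hy1
          show v y - u y = 0
          rw [sub_eq_zero, himp hy2]
          rfl
        rw [measure_mono_null hsub2 hvout', mul_zero]
    have hae : (fun p => Kd p * (σ p * (v p.2 - u p.2))) =ᵐ[π2] 0 := by
      rw [Filter.EventuallyEq, ae_iff]
      exact hnull
    exact integral_eq_zero_of_ae hae
  -- calibration equality for u, pointwise
  have hcalib : ∀ p : EuclideanSpace ℝ (Fin n) × EuclideanSpace ℝ (Fin n),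
      Kd p * |u p.2 - u p.1| = Kd p * (σ p * (u p.2 - u p.1)) := by
    intro p
    have := u_calib ν p.1 p.2
    rw [hu]
    rw [this]
  -- pointwise inequality for v
  have hptle : ∀ p : EuclideanSpace ℝ (Fin n) × EuclideanSpace ℝ (Fin n),
      Kd p * (σ p * (v p.2 - v p.1)) ≤ Kd p * |v p.2 - v p.1| := by
    intro p
    apply mul_le_mul_of_nonneg_left _ (hK0 _)
    calc σ p * (v p.2 - v p.1) ≤ |σ p * (v p.2 - v p.1)| := le_abs_self _
      _ = |σ p| * |v p.2 - v p.1| := abs_mul _ _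
      _ ≤ 1 * |v p.2 - v p.1| := mul_le_mul_of_nonneg_right (abs_sgn1_le _) (abs_nonneg _)
      _ = |v p.2 - v p.1| := one_mul _
  -- algebraic decomposition
  have hptalg : (fun p : EuclideanSpace ℝ (Fin n) × EuclideanSpace ℝ (Fin n) =>
      Kd p * (σ p * (u p.2 - u p.1)))
      = fun p => (Kd p * (σ p * (v p.2 - v p.1)) - Kd p * (σ p * (v p.2 - u p.2)))
        + Kd p * (σ p * (v p.1 - u p.1)) := by
    funext p; ring
  -- compute the u-integrals in terms of v-integrals
  have ha1 : (∫ p, Kd p * |u p.2 - u p.1| ∂π1)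
      = (∫ p, Kd p * (σ p * (v p.2 - v p.1)) ∂π1)
        + 2 * ∫ p, Kd p * (σ p * (v p.1 - u p.1)) ∂π1 := by
    calc (∫ p, Kd p * |u p.2 - u p.1| ∂π1)
        = ∫ p, (Kd p * (σ p * (v p.2 - v p.1)) - Kd p * (σ p * (v p.2 - u p.2)))
            + Kd p * (σ p * (v p.1 - u p.1)) ∂π1 := by
          apply integral_congr_ae (ae_of_all _ fun p => ?_)
          rw [hcalib p]; ring
      _ = (∫ p, Kd p * (σ p * (v p.2 - v p.1)) - Kd p * (σ p * (v p.2 - u p.2)) ∂π1)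
            + ∫ p, Kd p * (σ p * (v p.1 - u p.1)) ∂π1 :=
          integral_add (hIσv1.sub hIσw2_1) hIσw1_1
      _ = ((∫ p, Kd p * (σ p * (v p.2 - v p.1)) ∂π1)
            - ∫ p, Kd p * (σ p * (v p.2 - u p.2)) ∂π1)
            + ∫ p, Kd p * (σ p * (v p.1 - u p.1)) ∂π1 := by
          rw [integral_sub hIσv1 hIσw2_1]
      _ = _ := by rw [hswap]; ring
  have ha2 : (∫ p, Kd p * |u p.2 - u p.1| ∂π2)
      = (∫ p, Kd p * (σ p * (v p.2 - v p.1)) ∂π2)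
        + ∫ p, Kd p * (σ p * (v p.1 - u p.1)) ∂π2 := by
    calc (∫ p, Kd p * |u p.2 - u p.1| ∂π2)
        = ∫ p, (Kd p * (σ p * (v p.2 - v p.1)) - Kd p * (σ p * (v p.2 - u p.2)))
            + Kd p * (σ p * (v p.1 - u p.1)) ∂π2 := by
          apply integral_congr_ae (ae_of_all _ fun p => ?_)
          rw [hcalib p]; ring
      _ = (∫ p, Kd p * (σ p * (v p.2 - v p.1)) - Kd p * (σ p * (v p.2 - u p.2)) ∂π2)
            + ∫ p, Kd p * (σ p * (v p.1 - u p.1)) ∂π2 :=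
          integral_add (hIσv2.sub hIσw2_2) hIσw1_2
      _ = ((∫ p, Kd p * (σ p * (v p.2 - v p.1)) ∂π2)
            - ∫ p, Kd p * (σ p * (v p.2 - u p.2)) ∂π2)
            + ∫ p, Kd p * (σ p * (v p.1 - u p.1)) ∂π2 := by
          rw [integral_sub hIσv2 hIσw2_2]
      _ = _ := by rw [hπ2_zero]; ring
  -- monotonicity
  have hg1 : (∫ p, Kd p * (σ p * (v p.2 - v p.1)) ∂π1)
      ≤ ∫ p, Kd p * |v p.2 - v p.1| ∂π1 := integral_mono hIσv1 hIav1 hptle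
  have hg2 : (∫ p, Kd p * (σ p * (v p.2 - v p.1)) ∂π2)
      ≤ ∫ p, Kd p * |v p.2 - v p.1| ∂π2 := integral_mono hIσv2 hIav2 hptle
  -- conversion of nonlocalJ into real integrals
  have hconv : ∀ (w : EuclideanSpace ℝ (Fin n) → ℝ), Measurable w →
      Integrable (fun p => Kd p * |w p.2 - w p.1|) π1 →
      Integrable (fun p => Kd p * |w p.2 - w p.1|) π2 →
      nonlocalJ Kb B w = ENNReal.ofReal
        ((1/2) * (∫ p, Kd p * |w p.2 - w p.1| ∂π1) + ∫ p, Kd p * |w p.2 - w p.1| ∂π2) := by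
    intro w hw hInt1 hInt2
    have hnn : ∀ p : EuclideanSpace ℝ (Fin n) × EuclideanSpace ℝ (Fin n),
        0 ≤ Kd p * |w p.2 - w p.1| := fun p => mul_nonneg (hK0 _) (abs_nonneg _)
    have hp : ∀ s : Set (EuclideanSpace ℝ (Fin n)),
        (∫⁻ x in B, ∫⁻ y in s, ENNReal.ofReal (Kb (x - y)) * ENNReal.ofReal |w y - w x|)
        = ∫⁻ p, ENNReal.ofReal (Kd p * |w p.2 - w p.1|) ∂(μB.prod (volume.restrict s)) := by
      intro s
      rw [lintegral_prod (fun p => ENNReal.ofReal (Kd p * |w p.2 - w p.1|))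
        (((hKdmeas.mul ((hw.comp measurable_snd).sub
          (hw.comp measurable_fst)).abs).ennreal_ofReal).aemeasurable)]
      apply lintegral_congr fun x => lintegral_congr fun y => ?_
      rw [ENNReal.ofReal_mul (hK0 _)]
    unfold nonlocalJ
    rw [hp B, hp Bᶜ]
    rw [← ofReal_integral_eq_lintegral_ofReal hInt1 (ae_of_all _ hnn),
      ← ofReal_integral_eq_lintegral_ofReal hInt2 (ae_of_all _ hnn)]
    rw [ENNReal.ofReal_add (mul_nonneg (by norm_num) (integral_nonneg hnn))
      (integral_nonneg hnn), ENNReal.ofReal_mul (by norm_num : (0:ℝ) ≤ 1/2)]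
    congr 2
    rw [ENNReal.ofReal_div_of_pos (by norm_num), ENNReal.ofReal_one, ENNReal.ofReal_ofNat]
  -- put everything together
  rw [hconv u humeas hIau1 hIau2, hconv v hvmeas hIav1 hIav2]
  apply ENNReal.ofReal_le_ofReal
  have e1 := ha1
  have e2 := ha2
  nlinarith [hg1, hg2, hA2C2]


lemma J_sup {n : ℕ} (K : EuclideanSpace ℝ (Fin n) → ℝ)
    (hKmeas : Measurable K) (hK0 : ∀ x, 0 ≤ K x)
    (w : EuclideanSpace ℝ (Fin n) → ℝ) (hw : Measurable w) :
    nonlocalJ K (ball (0 : EuclideanSpace ℝ (Fin n)) 1) w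
      = ⨆ j : ℕ, nonlocalJ (fun z => K z * min 1 ((j:ℝ) * min 1 ‖z‖))
          (ball (0 : EuclideanSpace ℝ (Fin n)) 1) w := by
  set B := ball (0 : EuclideanSpace ℝ (Fin n)) 1 with hB
  set KT : ℕ → EuclideanSpace ℝ (Fin n) → ℝ :=
    fun j z => K z * min 1 ((j:ℝ) * min 1 ‖z‖) with hKT
  have hKTmeas : ∀ j : ℕ, Measurable (KT j) :=
    fun j => hKmeas.mul (measurable_const.min
      (measurable_const.mul (measurable_const.min measurable_norm)))
  have hKTmono : ∀ z, Monotone fun j : ℕ => KT j z := by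
    intro z j k hjk
    apply mul_le_mul_of_nonneg_left _ (hK0 z)
    exact min_le_min le_rfl (mul_le_mul_of_nonneg_right (Nat.cast_le.mpr hjk)
      (le_min zero_le_one (norm_nonneg _)))
  -- pointwise supremum identity
  have hpt : ∀ x y : EuclideanSpace ℝ (Fin n),
      ENNReal.ofReal (K (x - y)) * ENNReal.ofReal |w y - w x|
      = ⨆ j : ℕ, ENNReal.ofReal (KT j (x - y)) * ENNReal.ofReal |w y - w x| := by
    intro x y
    by_cases hxy : x = y
    · subst hxy; simp
    · have hz : x - y ≠ 0 := sub_ne_zero.mpr hxy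
      have hmin : 0 < min 1 ‖x - y‖ := lt_min one_pos (norm_pos_iff.mpr hz)
      have hsup : (⨆ j : ℕ, ENNReal.ofReal (KT j (x - y))) = ENNReal.ofReal (K (x - y)) := by
        apply le_antisymm
        · exact iSup_le fun j => ENNReal.ofReal_le_ofReal
            (mul_le_of_le_one_right (hK0 _) (min_le_left _ _))
        · obtain ⟨j, hj⟩ := exists_nat_ge (1 / min 1 ‖x - y‖)
          refine le_trans (le_of_eq ?_) (le_iSup (fun j => ENNReal.ofReal (KT j (x - y))) j)
          have h1 : (1:ℝ) ≤ (j:ℝ) * min 1 ‖x - y‖ := by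
            rw [div_le_iff₀ hmin] at hj
            linarith
          rw [hKT]
          simp only []
          rw [min_eq_left h1, mul_one]
      rw [← hsup, ENNReal.iSup_mul]
  -- supremum exchange for each piece
  have hpiece : ∀ s : Set (EuclideanSpace ℝ (Fin n)),
      (∫⁻ x in B, ∫⁻ y in s, ENNReal.ofReal (K (x - y)) * ENNReal.ofReal |w y - w x|)
      = ⨆ j : ℕ, ∫⁻ x in B, ∫⁻ y in s,
          ENNReal.ofReal (KT j (x - y)) * ENNReal.ofReal |w y - w x| := by
    intro s
    have hfmeas : ∀ j : ℕ, Measurable fun q : EuclideanSpace ℝ (Fin n) × EuclideanSpace ℝ (Fin n) =>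
        ENNReal.ofReal (KT j (q.1 - q.2)) * ENNReal.ofReal |w q.2 - w q.1| := by
      intro j
      exact (((hKTmeas j).comp (measurable_fst.sub measurable_snd)).ennreal_ofReal).mul
        (((hw.comp measurable_snd).sub (hw.comp measurable_fst)).abs.ennreal_ofReal)
    have hmono : ∀ x y : EuclideanSpace ℝ (Fin n), Monotone fun j : ℕ =>
        ENNReal.ofReal (KT j (x - y)) * ENNReal.ofReal |w y - w x| := by
      intro x y j k hjk
      exact mul_le_mul_left (ENNReal.ofReal_le_ofReal (hKTmono _ hjk)) _
    calc (∫⁻ x in B, ∫⁻ y in s, ENNReal.ofReal (K (x - y)) * ENNReal.ofReal |w y - w x|)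
        = ∫⁻ x in B, ∫⁻ y in s, ⨆ j : ℕ,
            ENNReal.ofReal (KT j (x - y)) * ENNReal.ofReal |w y - w x| :=
          lintegral_congr fun x => lintegral_congr fun y => hpt x y
      _ = ∫⁻ x in B, ⨆ j : ℕ, ∫⁻ y in s,
            ENNReal.ofReal (KT j (x - y)) * ENNReal.ofReal |w y - w x| := by
          apply lintegral_congr fun x => ?_
          exact lintegral_iSup
            (fun j => ((hKTmeas j).comp (measurable_const.sub measurable_id)).ennreal_ofReal.mul
              ((hw.sub measurable_const).abs.ennreal_ofReal))
            (fun j k hjk y => hmono x y hjk)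
      _ = ⨆ j : ℕ, ∫⁻ x in B, ∫⁻ y in s,
            ENNReal.ofReal (KT j (x - y)) * ENNReal.ofReal |w y - w x| := by
          apply lintegral_iSup
          · exact fun j => (hfmeas j).lintegral_prod_right'
          · exact fun j k hjk x => lintegral_mono fun y => hmono x y hjk
  -- assemble
  unfold nonlocalJ
  rw [hpiece B, hpiece Bᶜ, ENNReal.mul_iSup]
  apply ENNReal.iSup_add_iSup_of_monotone
  · intro j k hjk
    exact mul_le_mul_right (lintegral_mono fun x => lintegral_mono fun y =>
      mul_le_mul_left (ENNReal.ofReal_le_ofReal (hKTmono _ hjk)) _) _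
  · intro j k hjk
    exact lintegral_mono fun x => lintegral_mono fun y =>
      mul_le_mul_left (ENNReal.ofReal_le_ofReal (hKTmono _ hjk)) _

/-- The halfspace has finite nonlocal perimeter in the unit ball and is a local
minimizer subject to its own outer datum. -/
theorem halfspace_local_minimizer (n : ℕ) (hn : 1 ≤ n)
    (K : EuclideanSpace ℝ (Fin n) → ℝ) (hKmeas : Measurable K)
    (hK0 : ∀ x, 0 ≤ K x) (hKsymm : ∀ x, K (-x) = K x)
    (hKint : ∫⁻ x : EuclideanSpace ℝ (Fin n),
        ENNReal.ofReal (min 1 ‖x‖ * K x) < ⊤)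
    (ν : EuclideanSpace ℝ (Fin n)) (hν : ν ≠ 0) :
    nonlocalJ K (ball (0 : EuclideanSpace ℝ (Fin n)) 1)
        ((halfspace ν).indicator 1) < ⊤
    ∧ ∀ v : EuclideanSpace ℝ (Fin n) → ℝ, Measurable v →
        (∀ x, v x ∈ Icc (0 : ℝ) 1) →
        (∀ᵐ x : EuclideanSpace ℝ (Fin n),
          x ∉ ball (0 : EuclideanSpace ℝ (Fin n)) 1 →
            v x = (halfspace ν).indicator (fun _ => (1:ℝ)) x) →
        nonlocalJ K (ball (0 : EuclideanSpace ℝ (Fin n)) 1)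
            ((halfspace ν).indicator 1)
          ≤ nonlocalJ K (ball (0 : EuclideanSpace ℝ (Fin n)) 1) v := by
  constructor
  · exact J_halfspace_lt_top hn K hKmeas hK0 hKsymm hKint ν hν
  · intro v hvmeas hv01 hvout
    rw [J_sup K hKmeas hK0 _ (measurable_u ν), J_sup K hKmeas hK0 v hvmeas]
    apply iSup_mono
    intro j
    apply J_core
    · exact hKmeas.mul (measurable_const.min
        (measurable_const.mul (measurable_const.min measurable_norm)))
    · exact fun z => mul_nonneg (hK0 z) (le_min zero_le_one
        (mul_nonneg (Nat.cast_nonneg j) (le_min zero_le_one (norm_nonneg z))))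
    · intro z
      simp only [norm_neg, hKsymm]
    · calc (∫⁻ z, ENNReal.ofReal (K z * min 1 ((j:ℝ) * min 1 ‖z‖)))
          ≤ ∫⁻ z, ENNReal.ofReal ((j:ℝ)) * ENNReal.ofReal (min 1 ‖z‖ * K z) := by
            apply lintegral_mono fun z => ?_
            rw [← ENNReal.ofReal_mul (by positivity : (0:ℝ) ≤ (j:ℝ))]
            apply ENNReal.ofReal_le_ofReal
            calc K z * min 1 ((j:ℝ) * min 1 ‖z‖) ≤ K z * ((j:ℝ) * min 1 ‖z‖) :=
                  mul_le_mul_of_nonneg_left (min_le_right _ _) (hK0 z)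
              _ = (j:ℝ) * (min 1 ‖z‖ * K z) := by ring
        _ = ENNReal.ofReal ((j:ℝ)) * ∫⁻ z, ENNReal.ofReal (min 1 ‖z‖ * K z) :=
            lintegral_const_mul _ ((measurable_const.min measurable_norm).mul hKmeas).ennreal_ofReal
        _ < ⊤ := ENNReal.mul_lt_top ENNReal.ofReal_lt_top hKint
    · exact hvmeas
    · exact hv01
    · exact hvout
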